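/- arXiv:1404.5660 — 2 statements merged into one kernel-verified Lean document; each statement's English description precedes it below -/
import Mathlib

section
/- Let W > 0 and let s₀ ≥ 0, and let 0 ≤ s_i ≤ s_j with s₀ + s_i > 0, s_j > 0, s₀ + s_j > 0, s_i > 0. Then (s₀+s_i)·lg(W/(s₀+s_i)) + s_j·lg(W/s_j) - (s₀+s_j)·lg(W/(s₀+s_j)) - s_i·lg(W/s_i) ≥ 0. -/
/-- Exchange inequality for the entropy of summary trees. -/
theorem exchange_inequality (W s₀ si sj : ℝ) (hW : 0 < W) (hs₀ : 0 ≤ s₀)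
    (hsi : 0 < si) (hsj : 0 < sj) (hij : si ≤ sj)
    (h1 : 0 < s₀ + si) (h2 : 0 < s₀ + sj) :
    0 ≤ (s₀ + si) * Real.logb 2 (W / (s₀ + si)) + sj * Real.logb 2 (W / sj)
      - (s₀ + sj) * Real.logb 2 (W / (s₀ + sj)) - si * Real.logb 2 (W / si) := by
  have hlog2 : (0:ℝ) < Real.log 2 := Real.log_pos one_lt_two
  have key : (s₀+si)*Real.log (s₀+si) + sj*Real.log sj ≤
      si*Real.log si + (s₀+sj)*Real.log (s₀+sj) := by
    rcases eq_or_lt_of_le hs₀ with h0 | h0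
    · rw [← h0]; ring_nf; linarith
    · have hconv := Real.convexOn_mul_log
      have hden : 0 < s₀ + sj - si := by linarith
      set t := (sj - si)/(s₀ + sj - si) with ht
      have ht0 : 0 ≤ t := div_nonneg (by linarith) hden.le
      have ht1 : t ≤ 1 := by rw [div_le_one hden]; linarith
      have h1t : 0 ≤ 1 - t := by linarith
      have hb := hconv.2 (Set.mem_Ici.mpr hsi.le) (Set.mem_Ici.mpr h2.le) ht0 h1t
        (by ring)
      have hc := hconv.2 (Set.mem_Ici.mpr hsi.le) (Set.mem_Ici.mpr h2.le) h1t ht0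
        (by ring)
      simp only [smul_eq_mul] at hb hc
      have hmul : t * (s₀ + sj - si) = sj - si := div_mul_cancel₀ _ hden.ne'
      have e1 : t * si + (1-t) * (s₀+sj) = s₀ + si := by linear_combination -hmul
      have e2 : (1-t) * si + t * (s₀+sj) = sj := by linear_combination hmul
      rw [e1] at hb
      rw [e2] at hc
      linarith
  have expand : (s₀ + si) * Real.logb 2 (W / (s₀ + si)) + sj * Real.logb 2 (W / sj)
      - (s₀ + sj) * Real.logb 2 (W / (s₀ + sj)) - si * Real.logb 2 (W / si)
      = (si*Real.log si + (s₀+sj)*Real.log (s₀+sj)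
        - (s₀+si)*Real.log (s₀+si) - sj*Real.log sj)/Real.log 2 := by
    simp only [Real.logb, Real.log_div hW.ne' h1.ne', Real.log_div hW.ne' h2.ne',
      Real.log_div hW.ne' hsi.ne', Real.log_div hW.ne' hsj.ne']
    field_simp
    ring
  rw [expand]
  exact div_nonneg (by linarith) hlog2.le
end

section
/- Let W > 0, s₀ ≥ 0, and 0 < s_i ≤ s_j. Define g(x) = (s₀+x)·lg(W/(s₀+x)) + y·lg(W/y) where y is the other variable held fixed. Then the combined quantity (s₀+s_i)·lg(W/(s₀+s_i)) + s_j·lg(W/s_j) ≥ (s₀+s_j)·lg(W/(s₀+s_j)) + s_i·lg(W/s_i), with equality if and only if s_i = s_j or s₀ = 0. -/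
private lemma exch_mono (s₀ : ℝ) (hs : 0 < s₀) :
    StrictMonoOn (fun x => (x + s₀) * Real.log (x + s₀) - x * Real.log x) (Set.Ici 0) := by
  apply strictMonoOn_of_deriv_pos (convex_Ici 0)
  · exact ((Real.continuous_mul_log.comp (continuous_id.add continuous_const)).sub
      Real.continuous_mul_log).continuousOn
  · intro x hx
    rw [interior_Ici] at hx
    have hx : (0:ℝ) < x := hx
    have h1 : HasDerivAt (fun x : ℝ => (x + s₀) * Real.log (x + s₀))
        (Real.log (x + s₀) + 1) x := by
      have := (Real.hasDerivAt_mul_log (by positivity : x + s₀ ≠ 0)).comp x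
        ((hasDerivAt_id x).add_const s₀)
      simpa [Function.comp_def] using this
    have h2 := Real.hasDerivAt_mul_log hx.ne'
    rw [(show HasDerivAt (fun x => (x + s₀) * Real.log (x + s₀) - x * Real.log x) _ x from h1.sub h2).deriv]
    have : Real.log x < Real.log (x + s₀) := Real.log_lt_log hx (by linarith)
    linarith

private lemma exch_term (W x : ℝ) (hW : 0 < W) (hx : 0 < x) :
    x * Real.logb 2 (W / x) = (x * Real.log W - x * Real.log x) / Real.log 2 := by
  rw [Real.logb, Real.log_div hW.ne' hx.ne']
  ring

private lemma exch_lt (W s₀ si sj : ℝ) (hW : 0 < W) (hs₀ : 0 < s₀)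
    (hsi : 0 < si) (hij : si < sj) :
    (s₀ + sj) * Real.logb 2 (W / (s₀ + sj)) + si * Real.logb 2 (W / si) <
      (s₀ + si) * Real.logb 2 (W / (s₀ + si)) + sj * Real.logb 2 (W / sj) := by
  have hsj : 0 < sj := hsi.trans hij
  have hA : 0 < s₀ + si := by linarith
  have hB : 0 < s₀ + sj := by linarith
  have hlog2 : 0 < Real.log 2 := Real.log_pos one_lt_two
  have key := exch_mono s₀ hs₀ (Set.mem_Ici.2 hsi.le) (Set.mem_Ici.2 hsj.le) hij
  simp only [add_comm _ s₀] at key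
  rw [exch_term W _ hW hA, exch_term W _ hW hB, exch_term W _ hW hsi,
    exch_term W _ hW hsj, ← add_div, ← add_div,
    div_lt_div_iff_of_pos_right hlog2]
  nlinarith [key]

/-- Strict exchange inequality: grouping the smaller mass with s₀ is at least as good,
with equality iff s_i = s_j or s₀ = 0. -/
theorem exchange_strict (W s₀ si sj : ℝ) (hW : 0 < W) (hs₀ : 0 ≤ s₀)
    (hsi : 0 < si) (hij : si ≤ sj) :
    ((s₀ + sj) * Real.logb 2 (W / (s₀ + sj)) + si * Real.logb 2 (W / si) ≤
      (s₀ + si) * Real.logb 2 (W / (s₀ + si)) + sj * Real.logb 2 (W / sj)) ∧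
    ((s₀ + si) * Real.logb 2 (W / (s₀ + si)) + sj * Real.logb 2 (W / sj) =
      (s₀ + sj) * Real.logb 2 (W / (s₀ + sj)) + si * Real.logb 2 (W / si)
      ↔ si = sj ∨ s₀ = 0) := by
  rcases hs₀.eq_or_lt with h0 | h0
  · subst h0
    simp only [zero_add]
    exact ⟨le_of_eq (by ring), by constructor <;> intro _ <;> [right; skip] <;> first | rfl | trivial | ring⟩
  · rcases hij.eq_or_lt with hij' | hij'
    · subst hij'
      exact ⟨le_refl _, by simp⟩
    · have h := exch_lt W s₀ si sj hW h0 hsi hij'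
      refine ⟨h.le, ?_⟩
      constructor
      · intro heq; exact absurd heq (ne_of_gt h)
      · rintro (h1 | h1)
        · exact absurd h1 hij'.ne
        · exact absurd h1 h0.ne'
end
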